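/- Let S be a numerical semigroup with m(S) − ν(S) ≥ 2. If ⌊w_{m−1}/m⌋ = ⌊w_1/m⌋ + ⌊w_2/m⌋ (where m = m(S)), then n_L ≥ 3. -/

import Mathlib

/-- A numerical semigroup: an additive submonoid of `ℕ` (containing `0`, closed under
addition) whose complement in `ℕ` is finite. -/
structure NumericalSemigroup where
  carrier : Set ℕ
  zero_mem : 0 ∈ carrier
  add_mem : ∀ ⦃a b : ℕ⦄, a ∈ carrier → b ∈ carrier → a + b ∈ carrier
  cofinite : (carrierᶜ : Set ℕ).Finite

namespace NumericalSemigroup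

/-- The multiplicity `m(S)`: the smallest positive element of `S`. -/
noncomputable def mult (S : NumericalSemigroup) : ℕ :=
  sInf {s : ℕ | s ∈ S.carrier ∧ 0 < s}

/-- The embedding dimension `ν(S)`: the cardinality of the (unique) minimal system of
generators of `S`, i.e. the least cardinality of a generating set. -/
noncomputable def embdim (S : NumericalSemigroup) : ℕ :=
  sInf {n : ℕ | ∃ G : Finset ℕ,
    S.carrier = (AddSubmonoid.closure (G : Set ℕ) : Set ℕ) ∧ G.card = n}

/-- The Frobenius number `f(S)`: the largest integer not belonging to `S`. -/
noncomputable def frob (S : NumericalSemigroup) : ℤ :=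
  sSup {x : ℤ | ∀ s ∈ S.carrier, (s : ℤ) ≠ x}

/-- `n(S)`: the number of elements of `S` smaller than the Frobenius number. -/
noncomputable def small (S : NumericalSemigroup) : ℕ :=
  {s : ℕ | s ∈ S.carrier ∧ (s : ℤ) < S.frob}.ncard

/-- The type `t(S)`: the number of pseudo-Frobenius numbers of `S`, i.e. integers
`x ∉ S` such that `x + s ∈ S` for every nonzero `s ∈ S`. -/
noncomputable def typ (S : NumericalSemigroup) : ℕ :=
  {x : ℤ | (∀ s ∈ S.carrier, (s : ℤ) ≠ x) ∧
    ∀ s ∈ S.carrier, 0 < s → ∃ u ∈ S.carrier, (u : ℤ) = x + s}.ncard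

/-- The `k`-th interval `I_k = [k·m, (k+1)·m - 1]` (for a given `m`). -/
def interval (m k : ℕ) : Set ℕ := Set.Ico (k * m) ((k + 1) * m)

/-- `n_k`: the number of elements of `S ∩ I_k` smaller than the Frobenius number. -/
noncomputable def nk (S : NumericalSemigroup) (k : ℕ) : ℕ :=
  {s : ℕ | s ∈ S.carrier ∩ interval S.mult k ∧ (s : ℤ) < S.frob}.ncard

/-- `L = ⌊f(S)/m(S)⌋`. -/
noncomputable def Lindex (S : NumericalSemigroup) : ℤ := S.frob / (S.mult : ℤ)

/-- `ρ = f(S) + 1 - L·m(S)`. -/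
noncomputable def rho (S : NumericalSemigroup) : ℤ :=
  S.frob + 1 - S.Lindex * (S.mult : ℤ)

/-- The Apéry set `Ap(S) = {w ∈ S : w - m(S) ∉ S}`. -/
def apery (S : NumericalSemigroup) : Set ℕ :=
  {w : ℕ | w ∈ S.carrier ∧ ∀ u ∈ S.carrier, u + S.mult ≠ w}

theorem apery_finite (S : NumericalSemigroup) : S.apery.Finite := by
  apply Set.Finite.subset ((Set.finite_Iio S.mult).union (S.cofinite.image (· + S.mult)))
  intro x hx
  by_cases h : x < S.mult
  · exact Or.inl h
  · refine Or.inr ⟨x - S.mult, fun hmem => hx.2 _ hmem (by omega), ?_⟩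
    show x - S.mult + S.mult = x
    omega

/-- `w j`: the `(j+1)`-st smallest element of the Apéry set, so that
`Ap(S) = {w 0 < w 1 < ... < w (m-1)}` with `w 0 = 0`. -/
noncomputable def w (S : NumericalSemigroup) (j : ℕ) : ℕ :=
  (S.apery_finite.toFinset.sort (· ≤ ·)).getD j 0

/-- `ε_j`: the number of `k ∈ {0, ..., L-1}` such that `|I_k ∩ S| = j`. -/
noncomputable def eps (S : NumericalSemigroup) (j : ℕ) : ℕ :=
  {k : ℕ | (k : ℤ) < S.Lindex ∧ (S.carrier ∩ interval S.mult k).ncard = j}.ncard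

/-- `η_j`: the number of `k ∈ ℕ` such that `|I_k ∩ S| = j`. -/
noncomputable def eta (S : NumericalSemigroup) (j : ℕ) : ℕ :=
  {k : ℕ | (S.carrier ∩ interval S.mult k).ncard = j}.ncard

lemma exists_large (S : NumericalSemigroup) : ∃ N : ℕ, ∀ n, N ≤ n → n ∈ S.carrier := by
  obtain ⟨N, hN⟩ := S.cofinite.bddAbove
  refine ⟨N + 1, fun n hn => ?_⟩
  by_contra hc
  exact absurd (hN hc) (by omega)

lemma mult_mem_pos (S : NumericalSemigroup) : S.mult ∈ S.carrier ∧ 0 < S.mult := by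
  obtain ⟨N, hN⟩ := S.exists_large
  have hne : {s : ℕ | s ∈ S.carrier ∧ 0 < s}.Nonempty := ⟨N + 1, hN _ (by omega), by omega⟩
  exact Nat.sInf_mem hne

lemma mult_le (S : NumericalSemigroup) {s : ℕ} (hs : s ∈ S.carrier) (h0 : 0 < s) :
    S.mult ≤ s := Nat.sInf_le ⟨hs, h0⟩

lemma mul_mult_mem (S : NumericalSemigroup) (k : ℕ) : k * S.mult ∈ S.carrier := by
  induction k with
  | zero => simpa using S.zero_mem
  | succ n ih => have := S.add_mem ih S.mult_mem_pos.1; simpa [Nat.succ_mul] using this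

lemma add_mul_mult_mem (S : NumericalSemigroup) {s : ℕ} (hs : s ∈ S.carrier) (k : ℕ) :
    s + k * S.mult ∈ S.carrier := S.add_mem hs (S.mul_mult_mem k)

lemma frob_isGreatest (S : NumericalSemigroup) :
    IsGreatest {x : ℤ | ∀ s ∈ S.carrier, (s : ℤ) ≠ x} S.frob := by
  obtain ⟨N, hN⟩ := S.exists_large
  have hbdd : ∀ x ∈ {x : ℤ | ∀ s ∈ S.carrier, (s : ℤ) ≠ x}, x ≤ (N : ℤ) := by
    intro x hx
    by_contra hc
    push_neg at hc
    have h0 : 0 ≤ x := le_trans (Int.natCast_nonneg N) hc.le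
    have hmem : x.toNat ∈ S.carrier := hN _ (by omega)
    exact hx _ hmem (by omega)
  obtain ⟨g, hg, hub⟩ := Int.exists_greatest_of_bdd ⟨N, fun z hz => hbdd z hz⟩
    ⟨-1, fun s _ => by omega⟩
  have hfg : S.frob = g := by
    rw [frob]; exact IsGreatest.csSup_eq ⟨hg, fun z hz => hub z hz⟩
  rw [hfg]
  exact ⟨hg, fun z hz => hub z hz⟩

lemma frob_not_mem (S : NumericalSemigroup) : ∀ s ∈ S.carrier, (s : ℤ) ≠ S.frob :=
  S.frob_isGreatest.1

lemma le_frob (S : NumericalSemigroup) {n : ℕ} (hn : n ∉ S.carrier) : (n : ℤ) ≤ S.frob :=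
  S.frob_isGreatest.2 (by intro s hs hc; exact hn (by rwa [Nat.cast_inj.mp hc] at hs))

lemma mem_of_frob_lt (S : NumericalSemigroup) {n : ℕ} (hn : S.frob < n) : n ∈ S.carrier := by
  by_contra hc
  exact absurd (S.le_frob hc) (by omega)

lemma apery_rep (S : NumericalSemigroup) :
    ∀ s, s ∈ S.carrier → ∃ w ∈ S.apery, ∃ k, s = w + k * S.mult := by
  intro s
  induction s using Nat.strong_induction_on with
  | _ s ih =>
    intro hs
    by_cases hap : ∀ u ∈ S.carrier, u + S.mult ≠ s
    · exact ⟨s, ⟨hs, hap⟩, 0, by ring⟩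
    · push_neg at hap
      obtain ⟨u, hu, hum⟩ := hap
      have hlt : u < s := by have := S.mult_mem_pos.2; omega
      obtain ⟨w, hw, k, hk⟩ := ih u hlt hu
      exact ⟨w, hw, k + 1, by rw [Nat.add_mul]; omega⟩

/-- decomposable Apéry element -/

def Decomp (S : NumericalSemigroup) (a : ℕ) : Prop :=
  ∃ u v, u ∈ S.apery ∧ v ∈ S.apery ∧ u ≠ 0 ∧ v ≠ 0 ∧ a = u + v

lemma decomp_of_sum (S : NumericalSemigroup) {a b c : ℕ} (ha : a ∈ S.apery)
    (hb : b ∈ S.carrier) (hb0 : 0 < b) (hc : c ∈ S.carrier) (hc0 : 0 < c)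
    (habc : a = b + c) : S.Decomp a := by
  obtain ⟨u, hu, k, hk⟩ := S.apery_rep b hb
  obtain ⟨v, hv, l, hl⟩ := S.apery_rep c hc
  have hm0 := S.mult_mem_pos.2
  rcases Nat.eq_zero_or_pos (k + l) with hkl | hkl
  · have hk0 : k = 0 := by omega
    have hl0 : l = 0 := by omega
    subst hk0 hl0
    simp only [Nat.zero_mul, Nat.add_zero] at hk hl
    subst hk hl
    exact ⟨b, c, hu, hv, by omega, by omega, habc⟩
  · exfalso
    have hmem : u + v + (k + l - 1) * S.mult ∈ S.carrier :=
      S.add_mul_mult_mem (S.add_mem hu.1 hv.1) _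
    refine ha.2 _ hmem ?_
    have : a = u + v + (k + l) * S.mult := by rw [habc, hk, hl]; ring
    have h1 : (k + l - 1) * S.mult + S.mult = (k + l) * S.mult := by
      have : k + l - 1 + 1 = k + l := by omega
      rw [← Nat.succ_mul]; rw [Nat.succ_eq_add_one, this]
    omega

lemma apery_injOn_mod (S : NumericalSemigroup) :
    ∀ a ∈ S.apery, ∀ b ∈ S.apery, a % S.mult = b % S.mult → a = b := by
  have key : ∀ a ∈ S.apery, ∀ b ∈ S.apery, a ≤ b → a % S.mult = b % S.mult → a = b := by
    intro a ha b hb hab hmod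
    by_contra hne
    have hm0 := S.mult_mem_pos.2
    have hdvd : S.mult ∣ b - a := (Nat.modEq_iff_dvd' hab).mp hmod
    obtain ⟨t, ht⟩ := hdvd
    rcases Nat.eq_zero_or_pos t with rfl | ht1
    · simp at ht; omega
    · obtain ⟨t', rfl⟩ : ∃ t', t = t' + 1 := ⟨t - 1, by omega⟩
      refine hb.2 (a + t' * S.mult) (S.add_mul_mult_mem ha.1 t') ?_
      have expand : S.mult * (t' + 1) = t' * S.mult + S.mult := by ring
      omega
  intro a ha b hb hmod
  rcases le_total a b with hab | hab
  · exact key a ha b hb hab hmod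
  · exact (key b hb a ha hab hmod.symm).symm

lemma sInf_mod_apery (S : NumericalSemigroup) {r : ℕ} (hr : r < S.mult) :
    sInf {s : ℕ | s ∈ S.carrier ∧ s % S.mult = r} ∈ S.apery ∧
      sInf {s : ℕ | s ∈ S.carrier ∧ s % S.mult = r} % S.mult = r := by
  obtain ⟨N, hN⟩ := S.exists_large
  have hm0 := S.mult_mem_pos.2
  have hne : {s : ℕ | s ∈ S.carrier ∧ s % S.mult = r}.Nonempty := by
    refine ⟨r + S.mult * N, hN _ ?_, ?_⟩
    · have : N ≤ S.mult * N := Nat.le_mul_of_pos_left N hm0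
      omega
    · rw [Nat.add_mul_mod_self_left]
      exact Nat.mod_eq_of_lt hr
  have hmem := Nat.sInf_mem hne
  refine ⟨⟨hmem.1, fun u hu hum => ?_⟩, hmem.2⟩
  have humod : u % S.mult = r := by
    have : (u + S.mult) % S.mult = u % S.mult := Nat.add_mod_right u S.mult
    rw [hum] at this
    rw [← this]; exact hmem.2
  have hle := Nat.sInf_le (show u ∈ {s : ℕ | s ∈ S.carrier ∧ s % S.mult = r} from ⟨hu, humod⟩)
  omega

lemma apery_card (S : NumericalSemigroup) : S.apery_finite.toFinset.card = S.mult := by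
  classical
  have hm0 := S.mult_mem_pos.2
  rw [← Finset.card_range S.mult]
  apply le_antisymm
  · apply Finset.card_le_card_of_injOn (fun a => a % S.mult)
      (t := Finset.range S.mult)
    · intro a _; exact Finset.mem_range.mpr (Nat.mod_lt _ hm0)
    · intro a ha b hb hmod
      exact S.apery_injOn_mod a (S.apery_finite.mem_toFinset.mp ha) b
        (S.apery_finite.mem_toFinset.mp hb) hmod
  · apply Finset.card_le_card_of_injOn
      (fun r => sInf {s : ℕ | s ∈ S.carrier ∧ s % S.mult = r})
      (s := Finset.range S.mult)
    · intro r hr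
      exact S.apery_finite.mem_toFinset.mpr (S.sInf_mod_apery (Finset.mem_range.mp hr)).1
    · intro r1 hr1 r2 hr2 heq
      have h1 := (S.sInf_mod_apery (Finset.mem_range.mp (by simpa using hr1))).2
      have h2 := (S.sInf_mod_apery (Finset.mem_range.mp (by simpa using hr2))).2
      simp only at heq
      rw [← h1, ← h2, heq]

lemma length_sort_apery (S : NumericalSemigroup) :
    (S.apery_finite.toFinset.sort (· ≤ ·)).length = S.mult := by
  rw [Finset.length_sort, apery_card]

lemma w_lt_w (S : NumericalSemigroup) {i j : ℕ} (hij : i < j) (hj : j < S.mult) :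
    S.w i < S.w j := by
  have hj' : j < (S.apery_finite.toFinset.sort (· ≤ ·)).length := by
    rw [S.length_sort_apery]; exact hj
  have hi' : i < (S.apery_finite.toFinset.sort (· ≤ ·)).length := by omega
  unfold w
  rw [List.getD_eq_getElem _ _ hi', List.getD_eq_getElem _ _ hj']
  have := (Finset.sortedLT_sort S.apery_finite.toFinset).strictMono_get
    (show (⟨i, hi'⟩ : Fin _) < ⟨j, hj'⟩ from hij)
  simpa [List.get_eq_getElem] using this

lemma w_mem_apery (S : NumericalSemigroup) {j : ℕ} (hj : j < S.mult) : S.w j ∈ S.apery := by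
  have hj' : j < (S.apery_finite.toFinset.sort (· ≤ ·)).length := by
    rw [S.length_sort_apery]; exact hj
  unfold w
  rw [List.getD_eq_getElem _ _ hj']
  have hmem : (S.apery_finite.toFinset.sort (· ≤ ·))[j] ∈
      S.apery_finite.toFinset.sort (· ≤ ·) := List.getElem_mem _
  exact S.apery_finite.mem_toFinset.mp ((Finset.mem_sort _).mp hmem)

lemma exists_w_eq (S : NumericalSemigroup) {a : ℕ} (ha : a ∈ S.apery) :
    ∃ j, j < S.mult ∧ S.w j = a := by
  have hmem : a ∈ S.apery_finite.toFinset.sort (· ≤ ·) :=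
    (Finset.mem_sort _).mpr (S.apery_finite.mem_toFinset.mpr ha)
  obtain ⟨⟨j, hj⟩, hget⟩ := List.mem_iff_get.mp hmem
  refine ⟨j, by rw [← S.length_sort_apery]; exact hj, ?_⟩
  unfold w
  rw [List.getD_eq_getElem _ _ hj]
  simpa [List.get_eq_getElem] using hget

lemma zero_mem_apery (S : NumericalSemigroup) : (0 : ℕ) ∈ S.apery := by
  have hm0 := S.mult_mem_pos.2
  exact ⟨S.zero_mem, fun u _ => by omega⟩

lemma w_zero (S : NumericalSemigroup) : S.w 0 = 0 := by
  obtain ⟨j, hj, hw⟩ := S.exists_w_eq S.zero_mem_apery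
  rcases Nat.eq_zero_or_pos j with rfl | hj0
  · exact hw
  · have := S.w_lt_w hj0 hj
    omega

lemma carrier_eq_closure (S : NumericalSemigroup) :
    S.carrier = (AddSubmonoid.closure
      (((insert S.mult S.apery_finite.toFinset : Finset ℕ) : Set ℕ)) : Set ℕ) := by
  classical
  apply Set.Subset.antisymm
  · intro s hs
    obtain ⟨a, ha, k, hk⟩ := S.apery_rep s hs
    subst hk
    have ham : a ∈ AddSubmonoid.closure ((insert S.mult S.apery_finite.toFinset : Finset ℕ) : Set ℕ) :=
      AddSubmonoid.subset_closure (by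
        simp only [Finset.coe_insert, Set.mem_insert_iff]
        exact Or.inr (S.apery_finite.mem_toFinset.mpr ha))
    have hmm : S.mult ∈ AddSubmonoid.closure ((insert S.mult S.apery_finite.toFinset : Finset ℕ) : Set ℕ) :=
      AddSubmonoid.subset_closure (by simp)
    have hkm : k * S.mult ∈ AddSubmonoid.closure ((insert S.mult S.apery_finite.toFinset : Finset ℕ) : Set ℕ) := by
      have := AddSubmonoid.nsmul_mem _ hmm k
      simpa [nsmul_eq_mul] using this
    exact AddSubmonoid.add_mem _ ham hkm
  · set T : AddSubmonoid ℕ :=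
      { carrier := S.carrier
        add_mem' := fun ha hb => S.add_mem ha hb
        zero_mem' := S.zero_mem } with hT
    have hle : AddSubmonoid.closure ((insert S.mult S.apery_finite.toFinset : Finset ℕ) : Set ℕ) ≤ T := by
      rw [AddSubmonoid.closure_le]
      intro x hx
      simp only [Finset.coe_insert, Set.mem_insert_iff, Finset.mem_coe] at hx
      rcases hx with rfl | hx
      · exact S.mult_mem_pos.1
      · exact (S.apery_finite.mem_toFinset.mp hx).1
    exact fun x hx => hle hx

lemma mem_gen_or_decomp (S : NumericalSemigroup) {G : Finset ℕ}
    (hG : S.carrier = (AddSubmonoid.closure (G : Set ℕ) : Set ℕ)) {a : ℕ}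
    (ha : a ∈ S.carrier) :
    a = 0 ∨ a ∈ G ∨ ∃ b c, b ∈ S.carrier ∧ 0 < b ∧ c ∈ S.carrier ∧ 0 < c ∧ a = b + c := by
  rw [hG] at ha
  induction ha using AddSubmonoid.closure_induction with
  | mem x hx => exact Or.inr (Or.inl hx)
  | zero => exact Or.inl rfl
  | add x y hx hy ihx ihy =>
    rcases Nat.eq_zero_or_pos x with rfl | hx0
    · simpa using ihy
    rcases Nat.eq_zero_or_pos y with rfl | hy0
    · simpa using ihx
    have hxS : x ∈ S.carrier := by rw [hG]; exact hx
    have hyS : y ∈ S.carrier := by rw [hG]; exact hy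
    exact Or.inr (Or.inr ⟨x, y, hxS, hx0, hyS, hy0, rfl⟩)

lemma mult_not_apery (S : NumericalSemigroup) : S.mult ∉ S.apery :=
  fun hap => hap.2 0 S.zero_mem (zero_add S.mult)

lemma mult_mem_gen (S : NumericalSemigroup) {G : Finset ℕ}
    (hG : S.carrier = (AddSubmonoid.closure (G : Set ℕ) : Set ℕ)) : S.mult ∈ G := by
  obtain ⟨hmS, hm0⟩ := S.mult_mem_pos
  rcases S.mem_gen_or_decomp hG hmS with h0 | hG' | ⟨b, c, hb, hb0, hc, hc0, habc⟩
  · omega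
  · exact hG'
  · have := S.mult_le hb hb0
    have := S.mult_le hc hc0
    omega

lemma two_le_decomp (S : NumericalSemigroup) (h2 : S.embdim + 2 ≤ S.mult) :
    ∃ d₁ d₂, d₁ ∈ S.apery ∧ d₂ ∈ S.apery ∧ S.Decomp d₁ ∧ S.Decomp d₂ ∧ d₁ ≠ d₂ := by
  classical
  have hne : {n : ℕ | ∃ G : Finset ℕ,
      S.carrier = (AddSubmonoid.closure (G : Set ℕ) : Set ℕ) ∧ G.card = n}.Nonempty :=
    ⟨_, _, S.carrier_eq_closure, rfl⟩
  obtain ⟨G₀, hG₀, hGcard⟩ := Nat.sInf_mem hne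
  have hGν : G₀.card = S.embdim := hGcard
  set A := S.apery_finite.toFinset with hA
  have hAcard : A.card = S.mult := S.apery_card
  have h0A : 0 ∈ A := S.apery_finite.mem_toFinset.mpr S.zero_mem_apery
  set Astar := A.erase 0 with hAstar
  have hAstarcard : Astar.card = S.mult - 1 := by
    rw [hAstar, Finset.card_erase_of_mem h0A, hAcard]
  set Indec := Astar.filter (fun a => ¬ S.Decomp a) with hIndec
  set DecF := Astar.filter (fun a => S.Decomp a) with hDecF
  have hsplit : DecF.card + Indec.card = Astar.card :=
    Finset.card_filter_add_card_filter_not (fun a => S.Decomp a)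
  have hsub : insert S.mult Indec ⊆ G₀ := by
    intro x hx
    rcases Finset.mem_insert.mp hx with rfl | hx
    · exact S.mult_mem_gen hG₀
    · obtain ⟨hxstar, hxnd⟩ := Finset.mem_filter.mp hx
      have hx0 : x ≠ 0 := Finset.ne_of_mem_erase hxstar
      have hxap : x ∈ S.apery :=
        S.apery_finite.mem_toFinset.mp (Finset.mem_of_mem_erase hxstar)
      rcases S.mem_gen_or_decomp hG₀ hxap.1 with h0 | hG' | ⟨b, c, hb, hb0, hc, hc0, habc⟩
      · exact absurd h0 hx0
      · exact hG'
      · exact absurd (S.decomp_of_sum hxap hb hb0 hc hc0 habc) hxnd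
  have hmni : S.mult ∉ Indec := by
    intro hc
    exact S.mult_not_apery
      (S.apery_finite.mem_toFinset.mp (Finset.mem_of_mem_erase (Finset.mem_filter.mp hc).1))
  have hins : (insert S.mult Indec).card = Indec.card + 1 :=
    Finset.card_insert_of_notMem hmni
  have hle : Indec.card + 1 ≤ S.embdim := by
    rw [← hins, ← hGν]
    exact Finset.card_le_card hsub
  have hDcard : 2 ≤ DecF.card := by omega
  obtain ⟨d₁, hd₁, d₂, hd₂, hdne⟩ := Finset.one_lt_card.mp (by omega : 1 < DecF.card)
  obtain ⟨hd₁s, hd₁d⟩ := Finset.mem_filter.mp hd₁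
  obtain ⟨hd₂s, hd₂d⟩ := Finset.mem_filter.mp hd₂
  exact ⟨d₁, d₂, S.apery_finite.mem_toFinset.mp (Finset.mem_of_mem_erase hd₁s),
    S.apery_finite.mem_toFinset.mp (Finset.mem_of_mem_erase hd₂s), hd₁d, hd₂d, hdne⟩

/-- If `m(S) - ν(S) ≥ 2` and `⌊w_{m-1}/m⌋ = ⌊w_1/m⌋ + ⌊w_2/m⌋`,
then `n_L ≥ 3`. -/
theorem three_le_nL (S : NumericalSemigroup)
    (h : 2 ≤ S.mult - S.embdim)
    (heq : S.w (S.mult - 1) / S.mult = S.w 1 / S.mult + S.w 2 / S.mult) :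
    3 ≤ S.nk S.Lindex.toNat := by
  classical
  obtain ⟨hmS, hm0⟩ := S.mult_mem_pos
  -- embedding dimension bounds
  have hν1 : 1 ≤ S.embdim := by
    have hne : {n : ℕ | ∃ G : Finset ℕ,
        S.carrier = (AddSubmonoid.closure (G : Set ℕ) : Set ℕ) ∧ G.card = n}.Nonempty :=
      ⟨_, _, S.carrier_eq_closure, rfl⟩
    obtain ⟨G₀, hG₀, hGcard⟩ := Nat.sInf_mem hne
    have hpos : 0 < G₀.card := Finset.card_pos.mpr ⟨_, S.mult_mem_gen hG₀⟩
    have : G₀.card = S.embdim := hGcard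
    omega
  have hν2 : S.embdim + 2 ≤ S.mult := by omega
  have hm3 : 3 ≤ S.mult := by omega
  -- Frobenius basics
  have h2S : (2 : ℕ) ∉ S.carrier := fun hc => by have := S.mult_le hc (by omega); omega
  have hf2 : (2 : ℤ) ≤ S.frob := by simpa using S.le_frob h2S
  set F := S.frob.toNat with hFdef
  have hFc : (F : ℤ) = S.frob := Int.toNat_of_nonneg (by omega)
  have hFS : F ∉ S.carrier := fun hc => S.frob_not_mem F hc hFc
  have hFgt : ∀ n : ℕ, F < n → n ∈ S.carrier := fun n hn =>
    S.mem_of_frob_lt (by rw [← hFc]; exact_mod_cast hn)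
  have hF2 : 2 ≤ F := by omega
  -- max Apéry element is F + m
  have hFmA : F + S.mult ∈ S.apery := by
    refine ⟨hFgt _ (by omega), fun u hu hum => ?_⟩
    have : u = F := by omega
    exact hFS (this ▸ hu)
  have hapmax : ∀ a ∈ S.apery, a ≤ F + S.mult := by
    intro a ha
    by_contra hc
    push_neg at hc
    exact ha.2 (a - S.mult) (hFgt _ (by omega)) (by omega)
  have hwmax : S.w (S.mult - 1) = F + S.mult := by
    obtain ⟨j, hj, hwj⟩ := S.exists_w_eq hFmA
    have h1 : S.w (S.mult - 1) ≤ F + S.mult := hapmax _ (S.w_mem_apery (by omega))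
    have h2 : S.w j ≤ S.w (S.mult - 1) := by
      rcases Nat.lt_or_ge j (S.mult - 1) with hlt | hge
      · exact (S.w_lt_w hlt (by omega)).le
      · have : j = S.mult - 1 := by omega
        rw [this]
    omega
  -- the small Apéry elements
  have hw1A : S.w 1 ∈ S.apery := S.w_mem_apery (by omega)
  have hw2A : S.w 2 ∈ S.apery := S.w_mem_apery (by omega)
  have hwz := S.w_zero
  have hw01 : S.w 0 < S.w 1 := S.w_lt_w (by omega) (by omega)
  have hw12 : S.w 1 < S.w 2 := S.w_lt_w (by omega) (by omega)
  have hw1pos : 0 < S.w 1 := by omega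
  have hw2pos : 0 < S.w 2 := by omega
  have hmin1 : ∀ a ∈ S.apery, a ≠ 0 → S.w 1 ≤ a := by
    intro a ha h0
    obtain ⟨j, hj, hwj⟩ := S.exists_w_eq ha
    have hj0 : j ≠ 0 := by rintro rfl; rw [hwz] at hwj; exact h0 hwj.symm
    rcases Nat.lt_or_ge 1 j with hlt | hge
    · have := S.w_lt_w hlt hj; omega
    · have : j = 1 := by omega
      rw [this] at hwj; omega
  have hmin2 : ∀ a ∈ S.apery, a ≠ 0 → a ≠ S.w 1 → S.w 2 ≤ a := by
    intro a ha h0 h1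
    obtain ⟨j, hj, hwj⟩ := S.exists_w_eq ha
    have hj0 : j ≠ 0 := by rintro rfl; rw [hwz] at hwj; exact h0 hwj.symm
    have hj1 : j ≠ 1 := by rintro rfl; exact h1 hwj.symm
    rcases Nat.lt_or_ge 2 j with hlt | hge
    · have := S.w_lt_w hlt hj; omega
    · have : j = 2 := by omega
      rw [this] at hwj; omega
  -- residues and quotients
  set q1 := S.w 1 / S.mult with hq1def
  set r1 := S.w 1 % S.mult with hr1def
  set q2 := S.w 2 / S.mult with hq2def
  set r2 := S.w 2 % S.mult with hr2def
  set L := F / S.mult with hLdef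
  set ρ := F % S.mult with hρdef
  have he1 : S.mult * q1 + r1 = S.w 1 := Nat.div_add_mod _ _
  have he2 : S.mult * q2 + r2 = S.w 2 := Nat.div_add_mod _ _
  have heF : S.mult * L + ρ = F := Nat.div_add_mod _ _
  have hr1m : r1 < S.mult := Nat.mod_lt _ hm0
  have hr2m : r2 < S.mult := Nat.mod_lt _ hm0
  have hρm : ρ < S.mult := Nat.mod_lt _ hm0
  -- positivity of residues
  have hrespos : ∀ a ∈ S.apery, a ≠ 0 → 0 < a % S.mult := by
    intro a ha h0
    by_contra hc
    have hc0 : a % S.mult = 0 := by omega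
    have heqa : S.mult * (a / S.mult) + a % S.mult = a := Nat.div_add_mod _ _
    have hqpos : 0 < a / S.mult := by
      rcases Nat.eq_zero_or_pos (a / S.mult) with h' | h'
      · rw [h'] at heqa; omega
      · exact h'
    refine ha.2 ((a / S.mult - 1) * S.mult) (S.mul_mult_mem _) ?_
    have hk : (a / S.mult - 1) * S.mult + S.mult = S.mult * (a / S.mult) := by
      have h' : a / S.mult - 1 + 1 = a / S.mult := by omega
      calc (a / S.mult - 1) * S.mult + S.mult = (a / S.mult - 1 + 1) * S.mult := by ring
        _ = (a / S.mult) * S.mult := by rw [h']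
        _ = S.mult * (a / S.mult) := Nat.mul_comm _ _
    omega
  have hr1pos : 0 < r1 := hrespos _ hw1A (by omega)
  have hr2pos : 0 < r2 := hrespos _ hw2A (by omega)
  have hw1m : S.mult ≤ S.w 1 := S.mult_le hw1A.1 hw1pos
  have hw2m : S.mult ≤ S.w 2 := S.mult_le hw2A.1 hw2pos
  have hq1pos : 0 < q1 := by
    rcases Nat.eq_zero_or_pos q1 with h' | h'
    · rw [h'] at he1; omega
    · exact h'
  have hq2pos : 0 < q2 := by
    rcases Nat.eq_zero_or_pos q2 with h' | h'
    · rw [h'] at he2; omega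
    · exact h'
  -- the key equation from heq
  have hq12 : q1 + q2 = L + 1 := by
    rw [hwmax] at heq
    have : (F + S.mult) / S.mult = F / S.mult + 1 := Nat.add_div_right F hm0
    rw [this] at heq
    omega
  have hρpos : 0 < ρ := by
    rcases Nat.eq_zero_or_pos ρ with h' | h'
    · exfalso
      apply hFS
      have : L * S.mult ∈ S.carrier := S.mul_mult_mem L
      have hc : L * S.mult = F := by
        rw [Nat.mul_comm]; omega
      rwa [hc] at this
    · exact h'
  have hq1L : q1 ≤ L := by omega
  have hq2L : q2 ≤ L := by omega
  have hr12ne : r1 ≠ r2 := by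
    intro hc
    have := S.apery_injOn_mod _ hw1A _ hw2A hc
    omega
  have hshift : ∀ a ∈ S.apery, a / S.mult ≤ L → L * S.mult + a % S.mult ∈ S.carrier := by
    intro a ha hq
    obtain ⟨t, ht⟩ : ∃ t, L = a / S.mult + t := ⟨L - a / S.mult, by omega⟩
    have hmem := S.add_mul_mult_mem ha.1 t
    have heqa : S.mult * (a / S.mult) + a % S.mult = a := Nat.div_add_mod _ _
    have hring : (a / S.mult + t) * S.mult = S.mult * (a / S.mult) + t * S.mult := by ring
    have hswap : a + t * S.mult = L * S.mult + a % S.mult := by rw [ht]; omega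
    rwa [hswap] at hmem
  have hbS : L * S.mult + r1 ∈ S.carrier := hshift _ hw1A hq1L
  have hcS2 : L * S.mult + r2 ∈ S.carrier := hshift _ hw2A hq2L
  have hexp2 : S.mult * (L + 1) = S.mult * L + S.mult := by ring
  have hmulq : S.mult * (q1 + q2) = S.mult * q1 + S.mult * q2 := by ring
  have hq12m : S.mult * (q1 + q2) = S.mult * (L + 1) := by rw [hq12]
  have hsum : S.w 1 + S.w 2 = S.mult * (L + 1) + (r1 + r2) := by omega
  have hcomm : (L + 1) * S.mult = S.mult * (L + 1) := Nat.mul_comm _ _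
  have hcommL : L * S.mult = S.mult * L := Nat.mul_comm _ _
  have main : ∃ x y z : ℕ, x ∈ S.carrier ∧ y ∈ S.carrier ∧ z ∈ S.carrier ∧
      L * S.mult ≤ x ∧ L * S.mult ≤ y ∧ L * S.mult ≤ z ∧
      x < F ∧ y < F ∧ z < F ∧ x ≠ y ∧ x ≠ z ∧ y ≠ z := by
    by_cases hcase : ∀ u ∈ S.carrier, u + S.mult ≠ S.w 1 + S.w 2
    · have hw12A : S.w 1 + S.w 2 ∈ S.apery := ⟨S.add_mem hw1A.1 hw2A.1, hcase⟩
      have hle := hapmax _ hw12A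
      have hr12 : r1 + r2 ≤ ρ := by omega
      exact ⟨L * S.mult, L * S.mult + r1, L * S.mult + r2, S.mul_mult_mem L, hbS, hcS2,
        by omega, by omega, by omega, by omega, by omega, by omega⟩
    · push_neg at hcase
      obtain ⟨u, hu, hum⟩ := hcase
      have hueq : u = L * S.mult + (r1 + r2) := by omega
      have hult : u < F := by
        rcases Nat.lt_or_ge u F with h' | h'
        · exact h'
        exfalso
        have huneF : u ≠ F := fun hc => hFS (hc ▸ hu)
        have hr12 : ρ + 1 ≤ r1 + r2 := by omega
        obtain ⟨d₁, d₂, hd₁A, hd₂A, hd₁D, hd₂D, hdne⟩ := S.two_le_decomp hν2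
        have hkey : ∀ d, d ∈ S.apery → S.Decomp d → d ≠ S.w 1 + S.w 1 → False := by
          intro d hdA hdD hdne2
          obtain ⟨x, y, hxA, hyA, hx0, hy0, hdxy⟩ := hdD
          have hxge : S.w 1 ≤ x := hmin1 x hxA hx0
          have hyge : S.w 1 ≤ y := hmin1 y hyA hy0
          have hge : S.w 1 + S.w 2 ≤ d := by
            rcases eq_or_ne x (S.w 1) with hx1 | hx1
            · have hy1 : y ≠ S.w 1 := fun hy1 => hdne2 (by rw [hdxy, hx1, hy1])
              have := hmin2 y hyA hy0 hy1
              omega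
            · have := hmin2 x hxA hx0 hx1
              omega
          have hdle : d ≤ F + S.mult := hapmax d hdA
          omega
        rcases eq_or_ne d₁ (S.w 1 + S.w 1) with h1 | h1
        · exact hkey d₂ hd₂A hd₂D (fun hc => hdne (by rw [h1, hc]))
        · exact hkey d₁ hd₁A hd₁D h1
      exact ⟨L * S.mult, L * S.mult + r1, u, S.mul_mult_mem L, hbS, hu,
        by omega, by omega, by omega, by omega, by omega, by omega⟩
  obtain ⟨x, y, z, hxS, hyS, hzS, hxl, hyl, hzl, hxf, hyf, hzf, hxy, hxz, hyz⟩ := main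
  have hLind : S.Lindex.toNat = L := by
    have h1 : S.Lindex = ((L : ℕ) : ℤ) := by
      rw [Lindex, ← hFc, hLdef]
      exact (Int.natCast_ediv F S.mult).symm
    rw [h1, Int.toNat_natCast]
  have hmemE : ∀ s : ℕ, s ∈ S.carrier → L * S.mult ≤ s → s < F →
      s ∈ {s : ℕ | s ∈ S.carrier ∩ interval S.mult L ∧ (s : ℤ) < S.frob} := by
    intro s h1 h2 h3
    refine ⟨⟨h1, Set.mem_Ico.mpr ⟨h2, by omega⟩⟩, ?_⟩
    rw [← hFc]
    exact_mod_cast h3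
  have hfin : {s : ℕ | s ∈ S.carrier ∩ interval S.mult L ∧ (s : ℤ) < S.frob}.Finite :=
    (Set.finite_Ico (L * S.mult) ((L + 1) * S.mult)).subset (fun s hs => hs.1.2)
  have h3sub : ({x, y, z} : Set ℕ) ⊆
      {s : ℕ | s ∈ S.carrier ∩ interval S.mult L ∧ (s : ℤ) < S.frob} := by
    intro s hs
    simp only [Set.mem_insert_iff, Set.mem_singleton_iff] at hs
    rcases hs with rfl | rfl | rfl
    exacts [hmemE _ hxS hxl hxf, hmemE _ hyS hyl hyf, hmemE _ hzS hzl hzf]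
  have hcard3 : ({x, y, z} : Set ℕ).ncard = 3 :=
    Set.ncard_eq_three.mpr ⟨x, y, z, hxy, hxz, hyz, rfl⟩
  have hle3 := Set.ncard_le_ncard h3sub hfin
  have hnk : S.nk S.Lindex.toNat =
      {s : ℕ | s ∈ S.carrier ∩ interval S.mult L ∧ (s : ℤ) < S.frob}.ncard := by
    rw [nk, hLind]
  omega

end NumericalSemigroup
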